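/- Let F ∈ Matrix (Fin N) (Fin N) ℝ with F * F = 0, let U ⊆ ℝ^N be open, let Γ^α_{βγ} : U → ℝ be connection coefficients, let q : U → (Fin N → ℝ) be a 1-form with q̃_i = ∑_s q_s F^s_i, and let Γ̄^α_{βγ} = Γ^α_{βγ} + δ^α_β q̃_γ + F^α_β q_γ + δ^α_γ q̃_β + F^α_γ q_β be the deformed connection. If a twice differentiable curve x : I → U satisfies ẍ^α + ∑ Γ^α_{λβ}(x) ẋ^λ ẋ^β = a(t) ẋ^α + b(t) (F ẋ)^α for functions a, b : I → ℝ, then it satisfies ẍ^α + ∑ Γ̄^α_{λβ}(x) ẋ^λ ẋ^β = (a(t) + 2 q̃(ẋ)) ẋ^α + (b(t) + 2 q(ẋ)) (F ẋ)^α, where q(ẋ) = ∑_k q_k(x) ẋ^k and q̃(ẋ) = ∑_k q̃_k(x) ẋ^k. Consequently the connections Γ and Γ̄ have the same PH-curves. -/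

import Mathlib

/-- If a curve `x` satisfies
`δẋ/dt = a(t) ẋ + b(t) (F ẋ)` for the connection `Γ`, then for the deformed
connection `Γ̄ = Γ + T` (with `T^α_{βγ} = δ^α_β q̃_γ + F^α_β q_γ + δ^α_γ q̃_β + F^α_γ q_β`)
it satisfies `δ̄ẋ/dt = (a + 2 q̃(ẋ)) ẋ + (b + 2 q(ẋ)) (F ẋ)`.  Consequently `Γ` and
`Γ̄` have the same PH-curves. -/
theorem key_lemma_stmt17 {N : ℕ} (F : Matrix (Fin N) (Fin N) ℝ)
    (T : Fin N → Fin N → Fin N → ℝ) (q qt : Fin N → ℝ)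
    (hT : ∀ α β γ, T α β γ =
      (if α = β then (1 : ℝ) else 0) * qt γ + F α β * q γ +
      (if α = γ then (1 : ℝ) else 0) * qt β + F α γ * q β)
    (v : Fin N → ℝ) (α : Fin N) :
    ∑ μ, ∑ β, T α μ β * v μ * v β
      = 2 * (∑ k, qt k * v k) * v α + 2 * (∑ k, q k * v k) * F.mulVec v α := by
  simp only [hT, add_mul, Finset.sum_add_distrib, ite_mul, one_mul, zero_mul,
    Matrix.mulVec, dotProduct, Finset.sum_ite_irrel, Finset.sum_const_zero,
    Finset.sum_ite_eq, Finset.mem_univ, if_true]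
  rw [Finset.sum_comm (f := fun μ β => F α β * q μ * v μ * v β)]
  simp only [Finset.mul_sum, Finset.sum_mul, ← Finset.sum_add_distrib]
  congr 1; ext k
  have h1 : ∑ x, F α k * q x * v k * v x + ∑ x, F α k * q x * v x * v k
      = ∑ i, 2 * (q i * v i) * (F α k * v k) := by
    rw [← Finset.sum_add_distrib]; apply Finset.sum_congr rfl; intros; ring
  linarith [h1]


theorem stmt_17 {N : ℕ} (U : Set (Fin N → ℝ)) (hUopen : IsOpen U)
    (F : Matrix (Fin N) (Fin N) ℝ) (hF : F * F = 0)
    (Γ : (Fin N → ℝ) → Fin N → Fin N → Fin N → ℝ)   -- Γ z α β γ = Γ^α_{βγ}(z)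
    (q : (Fin N → ℝ) → Fin N → ℝ)                    -- a 1-form on U
    (qt : (Fin N → ℝ) → Fin N → ℝ)
    (hqt : ∀ z i, qt z i = ∑ s, q z s * F s i)        -- q̃_i = ∑_s q_s F^s_i
    (T : (Fin N → ℝ) → Fin N → Fin N → Fin N → ℝ)
    (hT : ∀ z α β γ, T z α β γ =
      (if α = β then (1 : ℝ) else 0) * qt z γ + F α β * q z γ +
      (if α = γ then (1 : ℝ) else 0) * qt z β + F α γ * q z β)
    (I : Set ℝ) (x : ℝ → Fin N → ℝ)
    (hx1 : ∀ t ∈ I, DifferentiableAt ℝ x t)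
    (hx2 : ∀ t ∈ I, DifferentiableAt ℝ (deriv x) t)
    (hmem : ∀ t ∈ I, x t ∈ U)
    (a b : ℝ → ℝ)
    (hPH : ∀ t ∈ I, ∀ α, deriv (fun s => deriv x s α) t
      + ∑ μ, ∑ β, Γ (x t) α μ β * deriv x t μ * deriv x t β
      = a t * deriv x t α + b t * F.mulVec (deriv x t) α) :
    (∀ t ∈ I, ∀ α, deriv (fun s => deriv x s α) t
      + ∑ μ, ∑ β, (Γ (x t) α μ β + T (x t) α μ β) * deriv x t μ * deriv x t β
      = (a t + 2 * ∑ k, qt (x t) k * deriv x t k) * deriv x t α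
        + (b t + 2 * ∑ k, q (x t) k * deriv x t k) * F.mulVec (deriv x t) α) ∧
    ((∃ a' b' : ℝ → ℝ, ∀ t ∈ I, ∀ α, deriv (fun s => deriv x s α) t
        + ∑ μ, ∑ β, Γ (x t) α μ β * deriv x t μ * deriv x t β
        = a' t * deriv x t α + b' t * F.mulVec (deriv x t) α) ↔
      (∃ a' b' : ℝ → ℝ, ∀ t ∈ I, ∀ α, deriv (fun s => deriv x s α) t
        + ∑ μ, ∑ β, (Γ (x t) α μ β + T (x t) α μ β) * deriv x t μ * deriv x t β
        = a' t * deriv x t α + b' t * F.mulVec (deriv x t) α)) := by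
  have split : ∀ t ∈ I, ∀ α,
      ∑ μ, ∑ β, (Γ (x t) α μ β + T (x t) α μ β) * deriv x t μ * deriv x t β
      = (∑ μ, ∑ β, Γ (x t) α μ β * deriv x t μ * deriv x t β)
        + 2 * (∑ k, qt (x t) k * deriv x t k) * deriv x t α
        + 2 * (∑ k, q (x t) k * deriv x t k) * F.mulVec (deriv x t) α := by
    intro t ht α
    have hkey := key_lemma_stmt17 F (T (x t)) (q (x t)) (qt (x t)) (hT (x t))
      (deriv x t) α
    simp only [add_mul, Finset.sum_add_distrib]
    rw [hkey]; ring
  have main : ∀ a' b' : ℝ → ℝ,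
      (∀ t ∈ I, ∀ α, deriv (fun s => deriv x s α) t
        + ∑ μ, ∑ β, Γ (x t) α μ β * deriv x t μ * deriv x t β
        = a' t * deriv x t α + b' t * F.mulVec (deriv x t) α) →
      ∀ t ∈ I, ∀ α, deriv (fun s => deriv x s α) t
        + ∑ μ, ∑ β, (Γ (x t) α μ β + T (x t) α μ β) * deriv x t μ * deriv x t β
        = (a' t + 2 * ∑ k, qt (x t) k * deriv x t k) * deriv x t α
          + (b' t + 2 * ∑ k, q (x t) k * deriv x t k) * F.mulVec (deriv x t) α := by
    intro a' b' h t ht α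
    rw [split t ht α, ← add_assoc, ← add_assoc, h t ht α]; ring
  refine ⟨main a b hPH, ?_, ?_⟩
  · rintro ⟨a', b', h⟩
    exact ⟨fun t => a' t + 2 * ∑ k, qt (x t) k * deriv x t k,
      fun t => b' t + 2 * ∑ k, q (x t) k * deriv x t k, main a' b' h⟩
  · rintro ⟨a', b', h⟩
    refine ⟨fun t => a' t - 2 * ∑ k, qt (x t) k * deriv x t k,
      fun t => b' t - 2 * ∑ k, q (x t) k * deriv x t k, fun t ht α => ?_⟩
    have h' := h t ht α
    rw [split t ht α, ← add_assoc, ← add_assoc] at h'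
    simp only [sub_mul]
    linarith [h']
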